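/- As n → ∞, the number #T_{n,p} of triangulations of the p-gon with n internal vertices satisfies #T_{n,p} ~ C(p)·(12√3)^n·n^{-5/2}, where C(p) = 3^{p-2}·p·(2p)! / (4√(2π)·(p!)^2). -/

import Mathlib

open Asymptotics Filter Real Nat Topology

/-- The number `#T_{n,p}` of rooted type I triangulations of the `p`-gon with `n` internal
vertices (with `#T_{0,1} = 0` by convention). -/
noncomputable def Tnp (n p : ℕ) : ℝ :=
  if n = 0 ∧ p = 1 then 0 else
    (4 : ℝ) ^ ((n : ℤ) - 1) * p * Nat.factorial (2 * p) *
        Nat.doubleFactorial (2 * p + 3 * n - 5) /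
      ((Nat.factorial p : ℝ) ^ 2 * Nat.factorial n * Nat.doubleFactorial (2 * p + n - 1))

/-- The constant `C(p) = 3^(p-2)·p·(2p)! / (4·√(2π)·(p!)^2)`. -/
noncomputable def Cfun (p : ℕ) : ℝ :=
  (3 : ℝ) ^ ((p : ℤ) - 2) * p * Nat.factorial (2 * p) /
    (4 * Real.sqrt (2 * Real.pi) * (Nat.factorial p : ℝ) ^ 2)

lemma stirling_one :
    Tendsto (fun n : ℕ => (n ! : ℝ) /
      (Real.sqrt (2 * π) * Real.sqrt n * ((n : ℝ) / Real.exp 1) ^ n)) atTop (𝓝 1) := by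
  have key : ∀ n : ℕ, (n ! : ℝ) / (Real.sqrt (2 * π) * Real.sqrt n * ((n : ℝ) / Real.exp 1) ^ n)
      = Stirling.stirlingSeq n / Real.sqrt π := by
    intro n
    rw [Stirling.stirlingSeq, div_div]
    congr 1
    rw [Real.sqrt_mul (by norm_num : (0:ℝ) ≤ 2) π, Real.sqrt_mul (by norm_num : (0:ℝ) ≤ 2) (n:ℝ)]
    ring
  simp only [key]
  have h := Stirling.tendsto_stirlingSeq_sqrt_pi.div_const (Real.sqrt π)
  rwa [div_self (Real.sqrt_ne_zero'.2 Real.pi_pos)] at h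

lemma glue_even_odd {α : Type*} {l : Filter α} {u : ℕ → α}
    (h1 : Tendsto (fun k => u (2 * k + 4)) atTop l)
    (h2 : Tendsto (fun k => u (2 * k + 5)) atTop l) :
    Tendsto u atTop l := by
  intro s hs
  have A1 : {k : ℕ | u (2 * k + 4) ∈ s} ∈ atTop := h1 hs
  have A2 : {k : ℕ | u (2 * k + 5) ∈ s} ∈ atTop := h2 hs
  rw [mem_atTop_sets] at A1 A2
  rw [mem_map, mem_atTop_sets]
  obtain ⟨N1, hN1⟩ := A1
  obtain ⟨N2, hN2⟩ := A2
  refine ⟨2 * N1 + 2 * N2 + 5, fun n hn => ?_⟩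
  rcases Nat.even_or_odd n with ⟨k, hk⟩ | ⟨k, hk⟩
  · have : n = 2 * (k - 2) + 4 := by omega
    rw [this]; exact hN1 _ (by omega)
  · have : n = 2 * (k - 2) + 5 := by omega
    rw [this]; exact hN2 _ (by omega)

lemma tendsto_fact_psi (A B : ℕ) (hA : 0 < A) :
    Tendsto (fun k : ℕ => ((A * k + B)! : ℝ) /
      (Real.sqrt (2 * π) * Real.sqrt A * Real.sqrt k * ((A : ℝ) * k) ^ (A * k + B) *
        (Real.exp (-(k : ℝ))) ^ A)) atTop (𝓝 1) := by
  have hm' : Tendsto (fun k : ℕ => A * k) atTop atTop :=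
    tendsto_atTop_mono (fun k => Nat.le_mul_of_pos_left k hA) tendsto_id
  have hm : Tendsto (fun k : ℕ => A * k + B) atTop atTop :=
    tendsto_atTop_mono (fun k => Nat.le_add_right _ _) hm'
  have hS := stirling_one.comp hm
  have hx : Tendsto (fun k : ℕ => (A : ℝ) * k) atTop atTop := by
    have := tendsto_natCast_atTop_atTop (R := ℝ) |>.comp hm'
    refine this.congr fun k => ?_
    simp only [Function.comp_apply]; push_cast; ring
  have h0 : Tendsto (fun k : ℕ => (B : ℝ) / ((A : ℝ) * k)) atTop (𝓝 0) :=
    tendsto_const_nhds.div_atTop hx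
  have h1 : Tendsto (fun k : ℕ => 1 + (B : ℝ) / ((A : ℝ) * k)) atTop (𝓝 1) := by
    simpa using tendsto_const_nhds.add h0
  have hsq : Tendsto (fun k : ℕ => Real.sqrt (1 + (B : ℝ) / ((A : ℝ) * k))) atTop (𝓝 1) := by
    have := (Real.continuous_sqrt.continuousAt (x := (1:ℝ))).tendsto.comp h1
    simpa [Function.comp_def] using this
  have hpow : Tendsto (fun k : ℕ => (1 + (B : ℝ) / ((A : ℝ) * k)) ^ (A * k)) atTop
      (𝓝 (Real.exp B)) := by
    have := (Real.tendsto_one_add_div_pow_exp (B : ℝ)).comp hm'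
    refine this.congr fun k => ?_
    push_cast [Function.comp]; ring_nf
  have hpB : Tendsto (fun k : ℕ => (1 + (B : ℝ) / ((A : ℝ) * k)) ^ B) atTop (𝓝 1) := by
    simpa using h1.pow B
  have total := hS.mul (((hsq.mul (hpow.mul hpB))).mul
    (tendsto_const_nhds (x := Real.exp (-(B : ℝ)))))
  rw [show (1 * ((1 * (Real.exp (B:ℝ) * 1)) * Real.exp (-(B:ℝ)))) = 1 by
    rw [Real.exp_neg]; field_simp] at total
  refine total.congr' ?_
  filter_upwards [eventually_ge_atTop 1] with k hk
  have hk0 : (0 : ℝ) < k := by exact_mod_cast hk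
  have hA0 : (0 : ℝ) < (A : ℝ) := by exact_mod_cast hA
  have hx0 : (0 : ℝ) < (A : ℝ) * k := mul_pos hA0 hk0
  have hM : ((A * k + B : ℕ) : ℝ) = (A : ℝ) * k + B := by push_cast; ring
  have hM0 : (0 : ℝ) < ((A * k + B : ℕ) : ℝ) := by rw [hM]; positivity
  have hr : 1 + (B : ℝ) / ((A : ℝ) * k) = ((A * k + B : ℕ) : ℝ) / ((A : ℝ) * k) := by
    rw [hM]; field_simp
  simp only [Function.comp]
  rw [hr, ← pow_add, Real.sqrt_div hM0.le, Real.sqrt_mul hA0.le, div_pow, div_pow,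
    Real.exp_one_pow]
  have hexpA : Real.exp (-(k : ℝ)) ^ A = (Real.exp ((A : ℝ) * k))⁻¹ := by
    rw [← Real.exp_nat_mul, ← Real.exp_neg]; congr 1; ring
  rw [hexpA, Real.exp_neg]
  have h2π : Real.sqrt (2 * π) ≠ 0 := Real.sqrt_ne_zero'.2 (by positivity)
  have hsM : Real.sqrt ((A * k + B : ℕ) : ℝ) ≠ 0 := Real.sqrt_ne_zero'.2 hM0
  have hsA : Real.sqrt (A : ℝ) ≠ 0 := Real.sqrt_ne_zero'.2 hA0
  have hsk : Real.sqrt (k : ℝ) ≠ 0 := Real.sqrt_ne_zero'.2 hk0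
  have hMM : ((A * k + B : ℕ) : ℝ) ^ (A * k + B) ≠ 0 := pow_ne_zero _ hM0.ne'
  have hxM : ((A : ℝ) * k) ^ (A * k + B) ≠ 0 := pow_ne_zero _ hx0.ne'
  have he1 : Real.exp ((A * k + B : ℕ) : ℝ) ≠ 0 := (Real.exp_pos _).ne'
  have he2 : Real.exp ((A : ℝ) * k) ≠ 0 := (Real.exp_pos _).ne'
  have he3 : Real.exp (B : ℝ) ≠ 0 := (Real.exp_pos _).ne'
  field_simp
  rw [hM, Real.exp_add]
  ring

lemma odd_df (j : ℕ) : ((2 * j + 1)‼ : ℝ) = (2 * j + 1)! / (2 ^ j * j !) := by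
  have h := Nat.factorial_eq_mul_doubleFactorial (2 * j)
  rw [Nat.doubleFactorial_two_mul] at h
  have h2 : (((2 * j + 1)!) : ℝ) = ((2 * j + 1)‼ : ℝ) * (2 ^ j * j !) := by exact_mod_cast h
  rw [h2]
  have : ((2:ℝ) ^ j * j !) ≠ 0 := by positivity
  field_simp

lemma even_df (j : ℕ) : ((2 * j)‼ : ℝ) = 2 ^ j * j ! := by
  exact_mod_cast congrArg (Nat.cast (R := ℝ)) (Nat.doubleFactorial_two_mul j)

lemma Tnp_even (p k : ℕ) :
    Tnp (2 * k + 4) p = 2 ^ (2 * k + 4) * ((p : ℝ) * (2 * p)! / ((p ! : ℝ) ^ 2)) *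
      ((6 * k + (2 * p + 7))! * (1 * k + (p + 1))!) /
      ((2 * k + 4)! * (3 * k + (p + 3))! * (2 * k + (2 * p + 3))!) := by
  rw [Tnp, if_neg (by omega)]
  rw [show 2 * p + 3 * (2 * k + 4) - 5 = 2 * (3 * k + (p + 3)) + 1 by omega,
      show 2 * p + (2 * k + 4) - 1 = 2 * (1 * k + (p + 1)) + 1 by omega,
      show (((2 * k + 4 : ℕ) : ℤ) - 1) = ((2 * k + 3 : ℕ) : ℤ) by push_cast; ring,
      zpow_natCast, odd_df, odd_df]
  rw [show 2 * (3 * k + (p + 3)) + 1 = 6 * k + (2 * p + 7) by ring,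
      show 2 * (1 * k + (p + 1)) + 1 = 2 * k + (2 * p + 3) by ring]
  have n1 : ((6 * k + (2 * p + 7))! : ℝ) ≠ 0 := by positivity
  have n2 : ((2 * k + (2 * p + 3))! : ℝ) ≠ 0 := by positivity
  have n3 : ((3 * k + (p + 3))! : ℝ) ≠ 0 := by positivity
  have n4 : ((1 * k + (p + 1))! : ℝ) ≠ 0 := by positivity
  have n5 : ((2 * k + 4)! : ℝ) ≠ 0 := by positivity
  have n6 : ((p)! : ℝ) ≠ 0 := by positivity
  rw [show (4 : ℝ) = 2 ^ 2 by norm_num, ← pow_mul]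
  field_simp
  ring

lemma Tnp_odd (p k : ℕ) :
    Tnp (2 * k + 5) p = 2 ^ (6 * k + 11) * ((p : ℝ) * (2 * p)! / ((p ! : ℝ) ^ 2)) *
      (3 * k + (p + 5))! / ((2 * k + 5)! * (1 * k + (p + 2))!) := by
  rw [Tnp, if_neg (by omega)]
  rw [show 2 * p + 3 * (2 * k + 5) - 5 = 2 * (3 * k + (p + 5)) by omega,
      show 2 * p + (2 * k + 5) - 1 = 2 * (1 * k + (p + 2)) by omega,
      show (((2 * k + 5 : ℕ) : ℤ) - 1) = ((2 * k + 4 : ℕ) : ℤ) by push_cast; ring,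
      zpow_natCast, even_df, even_df]
  have n1 : ((3 * k + (p + 5))! : ℝ) ≠ 0 := by positivity
  have n4 : ((1 * k + (p + 2))! : ℝ) ≠ 0 := by positivity
  have n5 : ((2 * k + 5)! : ℝ) ≠ 0 := by positivity
  have n6 : ((p)! : ℝ) ≠ 0 := by positivity
  rw [show (4 : ℝ) = 2 ^ 2 by norm_num, ← pow_mul]
  field_simp
  ring

lemma rpow_52 {x : ℝ} (hx : 0 < x) : x ^ ((5:ℝ)/2) = x ^ (2:ℕ) * Real.sqrt x := by
  rw [Real.sqrt_eq_rpow, ← Real.rpow_natCast x 2, ← Real.rpow_add hx]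
  norm_num

lemma rpow_neg52 {x : ℝ} (hx : 0 < x) : x ^ (-(5/2) : ℝ) = (x ^ (2:ℕ) * Real.sqrt x)⁻¹ := by
  rw [Real.rpow_neg hx.le, rpow_52 hx]

lemma even_ratio (p : ℕ) (hp : 1 ≤ p) :
    Tendsto (fun k : ℕ => Tnp (2 * k + 4) p /
      (Cfun p * (12 * Real.sqrt 3) ^ (2 * k + 4) * ((2 * k + 4 : ℕ) : ℝ) ^ (-(5/2) : ℝ)))
      atTop (𝓝 1) := by
  have s1 := tendsto_fact_psi 6 (2 * p + 7) (by norm_num)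
  have s2 := tendsto_fact_psi 1 (p + 1) (by norm_num)
  have s3 := tendsto_fact_psi 2 4 (by norm_num)
  have s4 := tendsto_fact_psi 3 (p + 3) (by norm_num)
  have s5 := tendsto_fact_psi 2 (2 * p + 3) (by norm_num)
  have hw : Tendsto (fun k : ℕ => (2 * (k:ℝ) + 4) / k) atTop (𝓝 2) := by
    have h4 : Tendsto (fun k : ℕ => (4:ℝ) / k) atTop (𝓝 0) :=
      tendsto_const_nhds.div_atTop tendsto_natCast_atTop_atTop
    have h2 := (tendsto_const_nhds (x := (2:ℝ)) (f := atTop (α := ℕ))).add h4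
    rw [add_zero] at h2
    refine h2.congr' ?_
    filter_upwards [eventually_gt_atTop 0] with k hk
    have hk0 : (k:ℝ) ≠ 0 := by positivity
    field_simp
  have hw52 : Tendsto (fun k : ℕ => ((2 * (k:ℝ) + 4) / k) ^ ((5:ℝ)/2)) atTop
      (𝓝 ((2:ℝ) ^ ((5:ℝ)/2))) := hw.rpow tendsto_const_nhds (Or.inl (by norm_num))
  have main := ((s1.mul s2).div ((s3.mul s4).mul s5) (by norm_num)).mul
      (hw52.const_mul ((2:ℝ) ^ (-(5/2) : ℝ)))
  rw [show (1 * 1 / (1 * 1 * 1) * ((2:ℝ) ^ (-(5/2) : ℝ) * (2:ℝ) ^ ((5:ℝ)/2))) = 1 by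
    rw [← Real.rpow_add two_pos]; norm_num] at main
  refine main.congr' ?_
  filter_upwards [eventually_ge_atTop 1] with k hk
  have hk0 : (0:ℝ) < (k:ℝ) := by exact_mod_cast hk
  have h24 : (0:ℝ) < 2*(k:ℝ)+4 := by positivity
  have hcast : ((2*k+4 : ℕ):ℝ) = 2*(k:ℝ)+4 := by push_cast; ring
  rw [Tnp_even p k, Cfun, hcast, rpow_neg52 h24, Real.div_rpow h24.le hk0.le,
      rpow_52 h24, rpow_52 hk0, rpow_neg52 two_pos]
  rw [show (12*Real.sqrt 3 : ℝ)^(2*k+4) = (2:ℝ)^(4*(k+2)) * (3:ℝ)^(3*(k+2)) by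
        rw [show 2*k+4 = 2*(k+2) by ring, pow_mul, mul_pow,
            Real.sq_sqrt (by norm_num : (0:ℝ) ≤ 3),
            show ((12:ℝ)^2*3) = 2^4*3^3 by norm_num, mul_pow, ← pow_mul, ← pow_mul]]
  rw [show (3:ℝ)^((p:ℤ)-2) = (3:ℝ)^(p+1)/(3:ℝ)^(3:ℕ) by
        rw [show (p:ℤ)-2 = ((p+1:ℕ):ℤ) - ((3:ℕ):ℤ) by push_cast; ring,
            zpow_sub₀ (by norm_num : (3:ℝ) ≠ 0), zpow_natCast, zpow_natCast]]
  push_cast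
  rw [show Real.sqrt 6 = Real.sqrt 2 * Real.sqrt 3 by
        rw [show (6:ℝ) = 2*3 by norm_num, Real.sqrt_mul (by norm_num : (0:ℝ) ≤ 2)],
      Real.sqrt_one]
  simp only [show (6:ℝ) = 2*3 from by norm_num, mul_pow, one_mul, pow_one]
  have F1 : ((6*k+(2*p+7))! : ℝ) ≠ 0 := by positivity
  have F2 : ((1*k+(p+1))! : ℝ) ≠ 0 := by positivity
  have F3 : ((2*k+4)! : ℝ) ≠ 0 := by positivity
  have F4 : ((3*k+(p+3))! : ℝ) ≠ 0 := by positivity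
  have F5 : ((2*k+(2*p+3))! : ℝ) ≠ 0 := by positivity
  have Fp : ((p)! : ℝ) ≠ 0 := by positivity
  have F2p : (((2*p))! : ℝ) ≠ 0 := by positivity
  have hpp : (p:ℝ) ≠ 0 := by simp; omega
  have q2 : Real.sqrt 2 ≠ 0 := Real.sqrt_ne_zero'.2 (by norm_num)
  have q3 : Real.sqrt 3 ≠ 0 := Real.sqrt_ne_zero'.2 (by norm_num)
  have qk : Real.sqrt (k:ℝ) ≠ 0 := Real.sqrt_ne_zero'.2 hk0
  have q2π : Real.sqrt (2*π) ≠ 0 := Real.sqrt_ne_zero'.2 (by positivity)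
  have qe : Real.exp (-(k:ℝ)) ≠ 0 := (Real.exp_pos _).ne'
  have hkne : (k:ℝ) ≠ 0 := hk0.ne'
  have h24ne : (2*(k:ℝ)+4) ≠ 0 := h24.ne'
  simp only [Pi.div_apply]
  field_simp
  ring

lemma odd_ratio (p : ℕ) (hp : 1 ≤ p) :
    Tendsto (fun k : ℕ => Tnp (2 * k + 5) p /
      (Cfun p * (12 * Real.sqrt 3) ^ (2 * k + 5) * ((2 * k + 5 : ℕ) : ℝ) ^ (-(5/2) : ℝ)))
      atTop (𝓝 1) := by
  have s1 := tendsto_fact_psi 3 (p + 5) (by norm_num)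
  have s3 := tendsto_fact_psi 2 5 (by norm_num)
  have s4 := tendsto_fact_psi 1 (p + 2) (by norm_num)
  have hw : Tendsto (fun k : ℕ => (2 * (k:ℝ) + 5) / k) atTop (𝓝 2) := by
    have h4 : Tendsto (fun k : ℕ => (5:ℝ) / k) atTop (𝓝 0) :=
      tendsto_const_nhds.div_atTop tendsto_natCast_atTop_atTop
    have h2 := (tendsto_const_nhds (x := (2:ℝ)) (f := atTop (α := ℕ))).add h4
    rw [add_zero] at h2
    refine h2.congr' ?_
    filter_upwards [eventually_gt_atTop 0] with k hk
    have hk0 : (k:ℝ) ≠ 0 := by positivity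
    field_simp
  have hw52 : Tendsto (fun k : ℕ => ((2 * (k:ℝ) + 5) / k) ^ ((5:ℝ)/2)) atTop
      (𝓝 ((2:ℝ) ^ ((5:ℝ)/2))) := hw.rpow tendsto_const_nhds (Or.inl (by norm_num))
  have main := (s1.div (s3.mul s4) (by norm_num)).mul
      (hw52.const_mul ((2:ℝ) ^ (-(5/2) : ℝ)))
  rw [show (1 / (1 * 1) * ((2:ℝ) ^ (-(5/2) : ℝ) * (2:ℝ) ^ ((5:ℝ)/2))) = 1 by
    rw [← Real.rpow_add two_pos]; norm_num] at main
  refine main.congr' ?_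
  filter_upwards [eventually_ge_atTop 1] with k hk
  have hk0 : (0:ℝ) < (k:ℝ) := by exact_mod_cast hk
  have h25 : (0:ℝ) < 2*(k:ℝ)+5 := by positivity
  have hcast : ((2*k+5 : ℕ):ℝ) = 2*(k:ℝ)+5 := by push_cast; ring
  rw [Tnp_odd p k, Cfun, hcast, rpow_neg52 h25, Real.div_rpow h25.le hk0.le,
      rpow_52 h25, rpow_52 hk0, rpow_neg52 two_pos]
  rw [show (12*Real.sqrt 3 : ℝ)^(2*k+5)
        = (2:ℝ)^(4*(k+2)) * (3:ℝ)^(3*(k+2)) * (2^2*3*Real.sqrt 3) by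
        rw [show 2*k+5 = 2*(k+2)+1 by ring, pow_succ, pow_mul, mul_pow,
            Real.sq_sqrt (by norm_num : (0:ℝ) ≤ 3),
            show ((12:ℝ)^2*3) = 2^4*3^3 by norm_num, mul_pow, ← pow_mul, ← pow_mul,
            show (12:ℝ) = 2^2*3 by norm_num]]
  rw [show (3:ℝ)^((p:ℤ)-2) = (3:ℝ)^(p+1)/(3:ℝ)^(3:ℕ) by
        rw [show (p:ℤ)-2 = ((p+1:ℕ):ℤ) - ((3:ℕ):ℤ) by push_cast; ring,
            zpow_sub₀ (by norm_num : (3:ℝ) ≠ 0), zpow_natCast, zpow_natCast]]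
  push_cast
  rw [Real.sqrt_one]
  simp only [mul_pow, one_mul, pow_one]
  have F1 : ((3*k+(p+5))! : ℝ) ≠ 0 := by positivity
  have F3 : ((2*k+5)! : ℝ) ≠ 0 := by positivity
  have F4 : ((1*k+(p+2))! : ℝ) ≠ 0 := by positivity
  have Fp : ((p)! : ℝ) ≠ 0 := by positivity
  have F2p : (((2*p))! : ℝ) ≠ 0 := by positivity
  have hpp : (p:ℝ) ≠ 0 := by simp; omega
  have q2 : Real.sqrt 2 ≠ 0 := Real.sqrt_ne_zero'.2 (by norm_num)
  have q3 : Real.sqrt 3 ≠ 0 := Real.sqrt_ne_zero'.2 (by norm_num)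
  have qk : Real.sqrt (k:ℝ) ≠ 0 := Real.sqrt_ne_zero'.2 hk0
  have q2π : Real.sqrt (2*π) ≠ 0 := Real.sqrt_ne_zero'.2 (by positivity)
  have qe : Real.exp (-(k:ℝ)) ≠ 0 := (Real.exp_pos _).ne'
  have hkne : (k:ℝ) ≠ 0 := hk0.ne'
  have h25ne : (2*(k:ℝ)+5) ≠ 0 := h25.ne'
  simp only [Pi.div_apply]
  field_simp
  ring


/-- As `n → ∞`, `#T_{n,p} ~ C(p)·(12√3)^n·n^(-5/2)`. -/
theorem Tnp_asymptotic (p : ℕ) (hp : 1 ≤ p) :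
    (fun n : ℕ => Tnp n p) ~[atTop]
      (fun n : ℕ => Cfun p * (12 * Real.sqrt 3) ^ n * (n : ℝ) ^ (-(5 / 2) : ℝ)) := by
  have hC : 0 < Cfun p := by
    rw [Cfun]
    have hp0 : (0:ℝ) < p := by exact_mod_cast hp
    positivity
  have hg : ∀ᶠ n : ℕ in atTop,
      (Cfun p * (12 * Real.sqrt 3) ^ n * (n : ℝ) ^ (-(5 / 2) : ℝ)) ≠ 0 := by
    filter_upwards [eventually_ge_atTop 1] with n hn
    have hn0 : (0:ℝ) < n := by exact_mod_cast hn
    have h3 : (0:ℝ) < 12 * Real.sqrt 3 := by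
      have := Real.sqrt_pos.2 (by norm_num : (0:ℝ) < 3); linarith
    have := Real.rpow_pos_of_pos hn0 (-(5/2) : ℝ)
    positivity
  rw [isEquivalent_iff_tendsto_one hg]
  have main := glue_even_odd
    (u := fun n : ℕ => Tnp n p /
      (Cfun p * (12 * Real.sqrt 3) ^ n * ((n : ℕ) : ℝ) ^ (-(5/2) : ℝ)))
    (even_ratio p hp) (odd_ratio p hp)
  exact main.congr fun n => rfl
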